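/- Let 𝔠 ⊆ R^{1×ℓ}⟨x,x*⟩ be a right chip space and I a left module generated by polynomials in R⟨x,x*⟩𝔠. Then (R^{ℓ×1}I + I*R^{1×ℓ}) ∩ 𝔠*R⟨x,x*⟩𝔠 = 𝔠*I + I*𝔠. -/

import Mathlib

open scoped BigOperators

namespace NSS

/-- Words in the `2g` free letters `x_1,…,x_g,x_1^*,…,x_g^*`
(a letter is a pair of an index and a `Bool`: `false` = unstarred, `true` = starred). -/
abbrev Word (g : ℕ) := FreeMonoid (Fin g × Bool)

/-- The free `*`-algebra `ℝ⟨x,x*⟩`. -/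
abbrev NC (g : ℕ) := MonoidAlgebra ℝ (Word g)

/-- `ν × ℓ` matrices of noncommutative polynomials. -/
abbrev NCMat (g ν ℓ : ℕ) := Matrix (Fin ν) (Fin ℓ) (NC g)

/-- The involution on words: reverse the word and swap starred/unstarred letters. -/
def wordStar {g : ℕ} (w : Word g) : Word g :=
  FreeMonoid.ofList (((FreeMonoid.toList w).map (fun p => (p.1, !p.2))).reverse)

/-- The involution on `ℝ⟨x,x*⟩`. -/
noncomputable def ncStar {g : ℕ} (p : NC g) : NC g :=
  MonoidAlgebra.ofCoeff (Finsupp.mapDomain wordStar (p.coeff : Word g →₀ ℝ))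

/-- The involution on matrix polynomials: transpose and apply `ncStar` entrywise. -/
noncomputable def matStar {g ν ℓ : ℕ} (p : NCMat g ν ℓ) : NCMat g ℓ ν :=
  Matrix.of fun i j => ncStar (p j i)

/-- The left action of a scalar polynomial on a matrix polynomial
(entrywise left multiplication, identifying `q` with `I ⊗ q`). -/
noncomputable def leftMul {g ν ℓ : ℕ} (q : NC g) (p : NCMat g ν ℓ) : NCMat g ν ℓ :=
  Matrix.of fun i j => q * p i j

/-- A constant real matrix, viewed as a matrix of noncommutative polynomials. -/
noncomputable def constMat {g m n : ℕ} (A : Matrix (Fin m) (Fin n) ℝ) : NCMat g m n :=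
  A.map (algebraMap ℝ (NC g))

/-- The space `ℝ^{ℓ×1}·I + I^*·ℝ^{1×ℓ}`. -/
noncomputable def realPart {g ℓ : ℕ} (I : Set (NCMat g 1 ℓ)) : Submodule ℝ (NCMat g ℓ ℓ) :=
  Submodule.span ℝ
    ({m | ∃ B : Matrix (Fin ℓ) (Fin 1) ℝ, ∃ a ∈ I, m = constMat B * a} ∪
     {m | ∃ B : Matrix (Fin 1) (Fin ℓ) ℝ, ∃ a ∈ I, m = matStar a * constMat B})

/-- Left `ℝ⟨x,x*⟩`-submodules of `ℝ^{1×ℓ}⟨x,x*⟩`. -/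
def IsLeftSubmodule {g ℓ : ℕ} (I : Set (NCMat g 1 ℓ)) : Prop :=
  0 ∈ I ∧ (∀ a b, a ∈ I → b ∈ I → a + b ∈ I) ∧
    (∀ (r : ℝ) a, a ∈ I → r • a ∈ I) ∧ ∀ (q : NC g) a, a ∈ I → leftMul q a ∈ I

/-- A left module `I` is *real* if any finite sum of hermitian squares lying in
`ℝ^{ℓ×1}·I + I^*·ℝ^{1×ℓ}` has all its terms in `I`. -/
def IsReal {g ℓ : ℕ} (I : Set (NCMat g 1 ℓ)) : Prop :=
  ∀ (n : ℕ) (p : Fin n → NCMat g 1 ℓ),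
    (∑ i, matStar (p i) * p i) ∈ realPart I → ∀ i, p i ∈ I

/-- The monomial `e_j ⊗ w ∈ ℝ^{1×ℓ}⟨x,x*⟩`. -/
noncomputable def rowMono {g ℓ : ℕ} (j : Fin ℓ) (w : Word g) : NCMat g 1 ℓ :=
  Matrix.of fun _ j' => if j' = j then (MonoidAlgebra.single w (1:ℝ) : NC g) else 0

/-- The left `ℝ⟨x,x*⟩`-submodule generated by a set. -/
def leftSpan {g ℓ : ℕ} (G : Set (NCMat g 1 ℓ)) : Set (NCMat g 1 ℓ) :=
  ⋂₀ {J | IsLeftSubmodule J ∧ G ⊆ J}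


/-- A set of row monomials (indexed by column and word) closed under right chips. -/
def IsRightChipClosed {g ℓ : ℕ} (S : Set (Fin ℓ × Word g)) : Prop :=
  ∀ (j : Fin ℓ) (u v : Word g), (j, u * v) ∈ S → (j, v) ∈ S

/-- The right chip space spanned by a chip-closed set of monomials. -/
noncomputable def chipSpace {g ℓ : ℕ} (S : Set (Fin ℓ × Word g)) :
    Submodule ℝ (NCMat g 1 ℓ) :=
  Submodule.span ℝ {p | ∃ m ∈ S, p = rowMono m.1 m.2}

/-- The space `ℝ⟨x,x*⟩·𝔠`. -/
noncomputable def algSpanChip {g ℓ : ℕ} (S : Set (Fin ℓ × Word g)) :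
    Submodule ℝ (NCMat g 1 ℓ) :=
  Submodule.span ℝ {p | ∃ q : NC g, ∃ c ∈ chipSpace S, p = leftMul q c}

/-- `Γ(𝔠)`: the set of columns `j` with `e_j ⊗ 1 ∈ 𝔠`. -/
def Gam {g ℓ : ℕ} (S : Set (Fin ℓ × Word g)) : Set (Fin ℓ) :=
  {j | (j, (1 : Word g)) ∈ S}

/-- The direct sum `⨁_{j ∈ Γ} e_j ⊗ ℝ⟨x,x*⟩`, i.e. row polynomials supported on
columns in `Γ`. -/
noncomputable def colSupported {g ℓ : ℕ} (Γ : Set (Fin ℓ)) : Submodule ℝ (NCMat g 1 ℓ) where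
  carrier := {p | ∀ j ∉ Γ, p 0 j = 0}
  add_mem' := by
    intro a b ha hb j hj
    simp [Matrix.add_apply, ha j hj, hb j hj]
  zero_mem' := by intro j hj; simp
  smul_mem' := by
    intro c a ha j hj
    simp [Matrix.smul_apply, ha j hj]

/-- The space `𝔠*·ℝ⟨x,x*⟩·𝔠 ⊆ ℝ^{ℓ×ℓ}⟨x,x*⟩`. -/
noncomputable def midSpan {g ℓ : ℕ} (S : Set (Fin ℓ × Word g)) :
    Submodule ℝ (NCMat g ℓ ℓ) :=
  Submodule.span ℝ
    {p | ∃ c₁ ∈ chipSpace S, ∃ q : NC g, ∃ c₂ ∈ chipSpace S, p = matStar c₁ * leftMul q c₂}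


/-! ### Auxiliary lemmas -/

section Aux

variable {g ℓ : ℕ}

lemma wordStar_one : wordStar (1 : Word g) = 1 := rfl

lemma wordStar_mul (u v : Word g) : wordStar (u * v) = wordStar v * wordStar u := by
  simp [wordStar, FreeMonoid.toList_mul]

lemma wordStar_wordStar (w : Word g) : wordStar (wordStar w) = w := by
  simp [wordStar, FreeMonoid.toList_ofList, List.map_reverse, List.map_map]
  have : ((fun p : Fin g × Bool => (p.1, !p.2)) ∘ fun p : Fin g × Bool => (p.1, !p.2)) = id := by
    funext p; simp
  rw [this, List.map_id]
  exact FreeMonoid.ofList_toList w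

lemma ncStar_zero : ncStar (0 : NC g) = 0 := by simp [ncStar]

lemma ncStar_add (p q : NC g) : ncStar (p + q) = ncStar p + ncStar q := by
  simp only [ncStar, MonoidAlgebra.coeff_add, Finsupp.mapDomain_add, MonoidAlgebra.ofCoeff_add]

lemma ncStar_smul (r : ℝ) (p : NC g) : ncStar (r • p) = r • ncStar p := by
  simp only [ncStar, MonoidAlgebra.coeff_smul, Finsupp.mapDomain_smul, MonoidAlgebra.ofCoeff_smul]

lemma ncStar_single (w : Word g) (r : ℝ) :
    ncStar (MonoidAlgebra.single w r) = MonoidAlgebra.single (wordStar w) r := by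
  simp only [ncStar, MonoidAlgebra.coeff_single, Finsupp.mapDomain_single,
    MonoidAlgebra.ofCoeff_single]

lemma ncStar_mul (p q : NC g) : ncStar (p * q) = ncStar q * ncStar p := by
  induction p using MonoidAlgebra.induction_linear with
  | zero => simp [ncStar_zero]
  | add a b ha hb =>
    rw [add_mul, ncStar_add ((show NC g from a) * q), ncStar_add a b, mul_add, ha, hb]
  | single w r =>
    induction q using MonoidAlgebra.induction_linear with
    | zero => simp [ncStar_zero]
    | add a b ha hb =>
      rw [mul_add, ncStar_add (_ * (show NC g from a)), ncStar_add a b, add_mul, ha, hb]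
    | single v s =>
      rw [MonoidAlgebra.single_mul_single, ncStar_single, ncStar_single, ncStar_single,
        MonoidAlgebra.single_mul_single, wordStar_mul, mul_comm s r]

lemma ncStar_one : ncStar (1 : NC g) = 1 := by
  rw [MonoidAlgebra.one_def, ncStar_single, wordStar_one]

lemma single_one_one : (MonoidAlgebra.single (1 : Word g) (1 : ℝ) : NC g) = 1 :=
  (MonoidAlgebra.one_def).symm

lemma ncmul_apply {m n k : ℕ} (A : NCMat g m n) (B : NCMat g n k) (i : Fin m) (j : Fin k) :
    @HMul.hMul (NCMat g m n) (NCMat g n k) (NCMat g m k)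
      CStarMatrix.instHMulOfFintypeOfMulOfAddCommMonoid A B i j = ∑ x, A i x * B x j := rfl

lemma matStar_zero {ν : ℕ} : matStar (0 : NCMat g ν ℓ) = 0 := by
  ext i j; simp [matStar, ncStar_zero]

lemma matStar_add {ν : ℕ} (a b : NCMat g ν ℓ) : matStar (a + b) = matStar a + matStar b := by
  ext i j; simp [matStar, ncStar_add]

lemma matStar_smul {ν : ℕ} (r : ℝ) (a : NCMat g ν ℓ) : matStar (r • a) = r • matStar a := by
  ext i j; simp [matStar, ncStar_smul]

lemma leftMul_zero {ν : ℕ} (q : NC g) : leftMul q (0 : NCMat g ν ℓ) = 0 := by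
  ext i j; simp [leftMul]

lemma leftMul_add {ν : ℕ} (q : NC g) (a b : NCMat g ν ℓ) :
    leftMul q (a + b) = leftMul q a + leftMul q b := by
  ext i j; simp [leftMul, mul_add]

lemma leftMul_smul {ν : ℕ} (q : NC g) (r : ℝ) (a : NCMat g ν ℓ) :
    leftMul q (r • a) = r • leftMul q a := by
  ext i j; simp [leftMul, mul_smul_comm]

lemma leftMul_leftMul {ν : ℕ} (q q' : NC g) (a : NCMat g ν ℓ) :
    leftMul q (leftMul q' a) = leftMul (q * q') a := by
  ext i j; simp [leftMul, mul_assoc]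

lemma gam_of_mem {S : Set (Fin ℓ × Word g)} (hS : IsRightChipClosed S) {j : Fin ℓ}
    {u : Word g} (h : (j, u) ∈ S) : j ∈ Gam S :=
  hS j u 1 (by rwa [mul_one])

lemma chipSpace_le_colSupported {S : Set (Fin ℓ × Word g)} (hS : IsRightChipClosed S) :
    chipSpace S ≤ colSupported (Gam S) := by
  apply Submodule.span_le.mpr
  rintro p ⟨⟨j, u⟩, hm, rfl⟩ k hk
  simp only [rowMono, Matrix.of_apply]
  rw [if_neg]
  rintro rfl
  exact hk (gam_of_mem hS hm)

lemma algSpanChip_le_colSupported {S : Set (Fin ℓ × Word g)} (hS : IsRightChipClosed S) :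
    algSpanChip S ≤ colSupported (Gam S) := by
  apply Submodule.span_le.mpr
  rintro p ⟨q, c, hc, rfl⟩ k hk
  have h1 := chipSpace_le_colSupported hS hc k hk
  simp [leftMul, h1]

lemma leftMul_mem_algSpanChip {S : Set (Fin ℓ × Word g)} (q : NC g) {p : NCMat g 1 ℓ}
    (hp : p ∈ algSpanChip S) : leftMul q p ∈ algSpanChip S := by
  induction hp using Submodule.span_induction with
  | mem x hx =>
    obtain ⟨q', c, hc, rfl⟩ := hx
    exact Submodule.subset_span ⟨q * q', c, hc, leftMul_leftMul q q' c⟩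
  | zero => rw [leftMul_zero]; exact Submodule.zero_mem _
  | add x y _ _ hx hy => rw [leftMul_add]; exact Submodule.add_mem _ hx hy
  | smul r x _ hx => rw [leftMul_smul]; exact Submodule.smul_mem _ r hx

lemma isLeftSubmodule_algSpanChip {S : Set (Fin ℓ × Word g)} :
    IsLeftSubmodule (algSpanChip S : Set (NCMat g 1 ℓ)) :=
  ⟨Submodule.zero_mem _, fun _ _ ha hb => Submodule.add_mem _ ha hb,
   fun r _ ha => Submodule.smul_mem _ r ha, fun q _ ha => leftMul_mem_algSpanChip q ha⟩

lemma isLeftSubmodule_leftSpan (G : Set (NCMat g 1 ℓ)) : IsLeftSubmodule (leftSpan G) := by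
  refine ⟨?_, ?_, ?_, ?_⟩
  · intro J hJ; exact hJ.1.1
  · intro a b ha hb J hJ; exact hJ.1.2.1 a b (ha J hJ) (hb J hJ)
  · intro r a ha J hJ; exact hJ.1.2.2.1 r a (ha J hJ)
  · intro q a ha J hJ; exact hJ.1.2.2.2 q a (ha J hJ)

lemma leftSpan_subset {G J : Set (NCMat g 1 ℓ)} (hJ : IsLeftSubmodule J) (hG : G ⊆ J) :
    leftSpan G ⊆ J := fun _ hx => hx J ⟨hJ, hG⟩

lemma midSpan_row_zero {S : Set (Fin ℓ × Word g)} (hS : IsRightChipClosed S)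
    {p : NCMat g ℓ ℓ} (hp : p ∈ midSpan S) {j : Fin ℓ} (hj : j ∉ Gam S) (k : Fin ℓ) :
    p j k = 0 := by
  induction hp using Submodule.span_induction with
  | mem x hx =>
    obtain ⟨c₁, hc₁, q, c₂, hc₂, rfl⟩ := hx
    rw [Matrix.mul_apply, Fin.sum_univ_one]
    have h1 : c₁ 0 j = 0 := chipSpace_le_colSupported hS hc₁ j hj
    simp [matStar, h1, ncStar_zero]
  | zero => simp
  | add x y _ _ hx hy => simp [Matrix.add_apply, hx, hy]
  | smul r x _ hx => simp [Matrix.smul_apply, hx]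

lemma midSpan_col_zero {S : Set (Fin ℓ × Word g)} (hS : IsRightChipClosed S)
    {p : NCMat g ℓ ℓ} (hp : p ∈ midSpan S) {k : Fin ℓ} (hk : k ∉ Gam S) (j : Fin ℓ) :
    p j k = 0 := by
  induction hp using Submodule.span_induction with
  | mem x hx =>
    obtain ⟨c₁, hc₁, q, c₂, hc₂, rfl⟩ := hx
    rw [Matrix.mul_apply, Fin.sum_univ_one]
    have h2 : c₂ 0 k = 0 := chipSpace_le_colSupported hS hc₂ k hk
    simp [leftMul, h2]
  | zero => simp
  | add x y _ _ hx hy => simp [Matrix.add_apply, hx, hy]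
  | smul r x _ hx => simp [Matrix.smul_apply, hx]

lemma exists_rows {I : Set (NCMat g 1 ℓ)} (hI : IsLeftSubmodule I) {r : NCMat g ℓ ℓ}
    (hr : r ∈ Submodule.span ℝ
      {m | ∃ B : Matrix (Fin ℓ) (Fin 1) ℝ, ∃ a ∈ I, m = constMat B * a}) :
    ∃ f : Fin ℓ → NCMat g 1 ℓ, (∀ j, f j ∈ I) ∧ ∀ j k, r j k = f j 0 k := by
  induction hr using Submodule.span_induction with
  | mem x hx =>
    obtain ⟨B, a, ha, rfl⟩ := hx
    refine ⟨fun j => B j 0 • a, fun j => hI.2.2.1 _ _ ha, fun j k => ?_⟩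
    rw [ncmul_apply, Fin.sum_univ_one]
    simp [constMat, Matrix.smul_apply, Algebra.smul_def]
  | zero => exact ⟨fun _ => 0, fun _ => hI.1, by simp⟩
  | add x y _ _ hx hy =>
    obtain ⟨f, hf, hfe⟩ := hx
    obtain ⟨f', hf', hfe'⟩ := hy
    exact ⟨fun j => f j + f' j, fun j => hI.2.1 _ _ (hf j) (hf' j),
      fun j k => by simp [Matrix.add_apply, hfe j k, hfe' j k]⟩
  | smul c x _ hx =>
    obtain ⟨f, hf, hfe⟩ := hx
    exact ⟨fun j => c • f j, fun j => hI.2.2.1 _ _ (hf j),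
      fun j k => by simp [Matrix.smul_apply, hfe j k]⟩

lemma exists_cols {I : Set (NCMat g 1 ℓ)} (hI : IsLeftSubmodule I) {c : NCMat g ℓ ℓ}
    (hc : c ∈ Submodule.span ℝ
      {m | ∃ B : Matrix (Fin 1) (Fin ℓ) ℝ, ∃ a ∈ I, m = matStar a * constMat B}) :
    ∃ h : Fin ℓ → NCMat g 1 ℓ, (∀ k, h k ∈ I) ∧ ∀ j k, c j k = ncStar (h k 0 j) := by
  induction hc using Submodule.span_induction with
  | mem x hx =>
    obtain ⟨B, a, ha, rfl⟩ := hx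
    refine ⟨fun k => B 0 k • a, fun k => hI.2.2.1 _ _ ha, fun j k => ?_⟩
    rw [ncmul_apply, Fin.sum_univ_one]
    simp only [matStar, Matrix.of_apply, constMat, Matrix.map_apply, Matrix.smul_apply,
      ncStar_smul]
    rw [← Algebra.commutes, ← Algebra.smul_def]
  | zero => exact ⟨fun _ => 0, fun _ => hI.1, by simp [ncStar_zero]⟩
  | add x y _ _ hx hy =>
    obtain ⟨f, hf, hfe⟩ := hx
    obtain ⟨f', hf', hfe'⟩ := hy
    exact ⟨fun k => f k + f' k, fun k => hI.2.1 _ _ (hf k) (hf' k),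
      fun j k => by simp [Matrix.add_apply, hfe j k, hfe' j k, ncStar_add]⟩
  | smul r x _ hx =>
    obtain ⟨f, hf, hfe⟩ := hx
    exact ⟨fun k => r • f k, fun k => hI.2.2.1 _ _ (hf k),
      fun j k => by simp [Matrix.smul_apply, hfe j k, ncStar_smul]⟩

lemma starChip_mul_mem_realPart {S : Set (Fin ℓ × Word g)} {I : Set (NCMat g 1 ℓ)}
    (hI : IsLeftSubmodule I) {c ι : NCMat g 1 ℓ} (hc : c ∈ chipSpace S) (hι : ι ∈ I) :
    matStar c * ι ∈ realPart I := by
  induction hc using Submodule.span_induction with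
  | mem x hx =>
    obtain ⟨⟨j, u⟩, hm, rfl⟩ := hx
    apply Submodule.subset_span
    left
    refine ⟨Matrix.of fun i _ => if i = j then 1 else 0,
      leftMul (MonoidAlgebra.single (wordStar u) 1) ι, hI.2.2.2 _ _ hι, ?_⟩
    ext i k : 1
    rw [Matrix.mul_apply, Fin.sum_univ_one, ncmul_apply, Fin.sum_univ_one]
    simp only [matStar, Matrix.of_apply, rowMono, constMat, Matrix.map_apply, leftMul]
    by_cases h : i = j
    · simp [h, ncStar_single, single_one_one]
    · simp [h, ncStar_zero]
  | zero => rw [matStar_zero, Matrix.zero_mul]; exact Submodule.zero_mem _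
  | add x y _ _ hx hy => rw [matStar_add, Matrix.add_mul]; exact Submodule.add_mem _ hx hy
  | smul r x _ hx => rw [matStar_smul, Matrix.smul_mul]; exact Submodule.smul_mem _ r hx

lemma starChip_mul_mem_midSpan {S : Set (Fin ℓ × Word g)} {c ι : NCMat g 1 ℓ}
    (hc : c ∈ chipSpace S) (hι : ι ∈ algSpanChip S) : matStar c * ι ∈ midSpan S := by
  induction hι using Submodule.span_induction with
  | mem x hx =>
    obtain ⟨q, c₂, hc₂, rfl⟩ := hx
    exact Submodule.subset_span ⟨c, hc, q, c₂, hc₂, rfl⟩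
  | zero => rw [Matrix.mul_zero]; exact Submodule.zero_mem _
  | add x y _ _ hx hy => rw [Matrix.mul_add]; exact Submodule.add_mem _ hx hy
  | smul r x _ hx => rw [Matrix.mul_smul]; exact Submodule.smul_mem _ r hx

lemma mul_chip_mem_realPart {S : Set (Fin ℓ × Word g)} {I : Set (NCMat g 1 ℓ)}
    (hI : IsLeftSubmodule I) {c ι : NCMat g 1 ℓ} (hc : c ∈ chipSpace S) (hι : ι ∈ I) :
    matStar ι * c ∈ realPart I := by
  induction hc using Submodule.span_induction with
  | mem x hx =>
    obtain ⟨⟨j, u⟩, hm, rfl⟩ := hx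
    apply Submodule.subset_span
    right
    refine ⟨Matrix.of fun _ m => if m = j then 1 else 0,
      leftMul (MonoidAlgebra.single (wordStar u) 1) ι, hI.2.2.2 _ _ hι, ?_⟩
    ext i m : 1
    rw [Matrix.mul_apply, Fin.sum_univ_one, ncmul_apply, Fin.sum_univ_one]
    simp only [matStar, Matrix.of_apply, rowMono, constMat, Matrix.map_apply, leftMul]
    rw [ncStar_mul, ncStar_single, wordStar_wordStar]
    by_cases h : m = j
    · simp [h, single_one_one]
    · simp [h]
  | zero => rw [Matrix.mul_zero]; exact Submodule.zero_mem _
  | add x y _ _ hx hy => rw [Matrix.mul_add]; exact Submodule.add_mem _ hx hy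
  | smul r x _ hx => rw [Matrix.mul_smul]; exact Submodule.smul_mem _ r hx

lemma mul_chip_mem_midSpan {S : Set (Fin ℓ × Word g)} {c ι : NCMat g 1 ℓ}
    (hc : c ∈ chipSpace S) (hι : ι ∈ algSpanChip S) : matStar ι * c ∈ midSpan S := by
  induction hι using Submodule.span_induction with
  | mem x hx =>
    obtain ⟨q, c₂, hc₂, rfl⟩ := hx
    have he : matStar (leftMul q c₂) * c = matStar c₂ * leftMul (ncStar q) c := by
      ext i m
      rw [Matrix.mul_apply, Fin.sum_univ_one, Matrix.mul_apply, Fin.sum_univ_one]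
      simp only [matStar, Matrix.of_apply, leftMul]
      rw [ncStar_mul, mul_assoc]
    rw [he]
    exact Submodule.subset_span ⟨c₂, hc₂, ncStar q, c, hc, rfl⟩
  | zero => rw [matStar_zero, Matrix.zero_mul]; exact Submodule.zero_mem _
  | add x y _ _ hx hy => rw [matStar_add, Matrix.add_mul]; exact Submodule.add_mem _ hx hy
  | smul r x _ hx => rw [matStar_smul, Matrix.smul_mul]; exact Submodule.smul_mem _ r hx

end Aux

/-- if `I` is a left module generated by polynomials in `ℝ⟨x,x*⟩𝔠`, then
`(ℝ^{ℓ×1}I + I*ℝ^{1×ℓ}) ∩ 𝔠*ℝ⟨x,x*⟩𝔠 = 𝔠*I + I*𝔠`. -/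
theorem stmt10 {g ℓ : ℕ} (S : Set (Fin ℓ × Word g)) (hS : IsRightChipClosed S)
    (I : Set (NCMat g 1 ℓ))
    (hgen : ∃ G : Set (NCMat g 1 ℓ), G ⊆ (algSpanChip S : Set (NCMat g 1 ℓ)) ∧
      I = leftSpan G) :
    realPart I ⊓ midSpan S =
      Submodule.span ℝ
        ({m | ∃ c ∈ chipSpace S, ∃ ι ∈ I, m = matStar c * ι} ∪
         {m | ∃ c ∈ chipSpace S, ∃ ι ∈ I, m = matStar ι * c}) := by
  obtain ⟨G, hG, hIeq⟩ := hgen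
  have hImod : IsLeftSubmodule I := hIeq ▸ isLeftSubmodule_leftSpan G
  have hIalg : I ⊆ (algSpanChip S : Set (NCMat g 1 ℓ)) :=
    hIeq ▸ leftSpan_subset isLeftSubmodule_algSpanChip hG
  have hIcol : ∀ a ∈ I, ∀ j ∉ Gam S, a 0 j = 0 := fun a ha =>
    algSpanChip_le_colSupported hS (hIalg ha)
  apply le_antisymm
  · rintro p hp
    rw [Submodule.mem_inf] at hp
    obtain ⟨hp1, hp2⟩ := hp
    unfold realPart at hp1
    rw [Submodule.span_union] at hp1
    obtain ⟨r, hr, c, hc, hrc⟩ := Submodule.mem_sup.mp hp1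
    subst hrc
    obtain ⟨f, hf, hfe⟩ := exists_rows hImod hr
    obtain ⟨h, hh, hhe⟩ := exists_cols hImod hc
    have hpe : ∀ a b, (r + c) a b = f a 0 b + ncStar (h b 0 a) := fun a b => by
      rw [Matrix.add_apply, hfe a b, hhe a b]
    have hX : ∀ j a b, (matStar (rowMono j 1) * f j : NCMat g ℓ ℓ) a b = if a = j then f j 0 b else 0 := by
      intro j a b
      rw [ncmul_apply, Fin.sum_univ_one]
      simp only [matStar, Matrix.of_apply, rowMono]
      by_cases hab : a = j
      · simp [hab, ncStar_single, wordStar_one, single_one_one, ncStar_one]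
      · simp [hab, ncStar_zero]
    have hY : ∀ k a b, (matStar (h k) * rowMono k 1 : NCMat g ℓ ℓ) a b
        = if b = k then ncStar (h k 0 a) else 0 := by
      intro k a b
      rw [ncmul_apply, Fin.sum_univ_one]
      simp only [matStar, Matrix.of_apply, rowMono]
      by_cases hab : b = k
      · simp [hab, single_one_one]
      · simp [hab]
    have hsum : r + c = (∑ j : Fin ℓ, matStar (rowMono j 1) * f j)
        + ∑ k : Fin ℓ, matStar (h k) * rowMono k 1 := by
      ext a b
      rw [hpe a b, Matrix.add_apply, Matrix.sum_apply, Matrix.sum_apply]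
      have e1 : ∀ j ∈ Finset.univ, (matStar (rowMono j 1) * f j : NCMat g ℓ ℓ) a b
          = if a = j then f j 0 b else 0 := fun j _ => hX j a b
      have e2 : ∀ k ∈ Finset.univ, (matStar (h k) * rowMono k 1 : NCMat g ℓ ℓ) a b
          = if b = k then ncStar (h k 0 a) else 0 := fun k _ => hY k a b
      rw [Finset.sum_congr rfl e1, Finset.sum_congr rfl e2,
        Finset.sum_ite_eq Finset.univ a (fun j => f j 0 b),
        Finset.sum_ite_eq Finset.univ b (fun k => ncStar (h k 0 a))]
      simp
    rw [hsum]
    apply Submodule.add_mem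
    · apply Submodule.sum_mem
      intro j _
      by_cases hj : j ∈ Gam S
      · have hcm : rowMono j (1 : Word g) ∈ chipSpace S :=
          Submodule.subset_span ⟨((j, (1 : Word g)) : Fin ℓ × Word g), hj, rfl⟩
        have hmem : (matStar (rowMono j (1 : Word g)) * f j : NCMat g ℓ ℓ) ∈
            {m : NCMat g ℓ ℓ | ∃ c ∈ chipSpace S, ∃ ι ∈ I, m = matStar c * ι} :=
          ⟨rowMono j (1 : Word g), hcm, f j, hf j, rfl⟩
        exact Submodule.subset_span (Set.mem_union_left _ hmem)
      · have hXz : matStar (rowMono j 1) * f j = (0 : NCMat g ℓ ℓ) := by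
          ext a b : 1
          rw [hX j a b, Matrix.zero_apply]
          by_cases hab : a = j
          · subst hab
            have h1 : (r + c) a b = 0 := midSpan_row_zero hS hp2 hj b
            have h2 : h b 0 a = 0 := hIcol _ (hh b) a hj
            rw [hpe a b, h2, ncStar_zero, add_zero] at h1
            simp [h1]
          · rw [if_neg hab]
        rw [hXz]
        exact Submodule.zero_mem _
    · apply Submodule.sum_mem
      intro k _
      by_cases hk : k ∈ Gam S
      · have hcm : rowMono k (1 : Word g) ∈ chipSpace S :=
          Submodule.subset_span ⟨((k, (1 : Word g)) : Fin ℓ × Word g), hk, rfl⟩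
        have hmem : (matStar (h k) * rowMono k (1 : Word g) : NCMat g ℓ ℓ) ∈
            {m : NCMat g ℓ ℓ | ∃ c ∈ chipSpace S, ∃ ι ∈ I, m = matStar ι * c} :=
          ⟨rowMono k (1 : Word g), hcm, h k, hh k, rfl⟩
        exact Submodule.subset_span (Set.mem_union_right _ hmem)
      · have hYz : matStar (h k) * rowMono k 1 = (0 : NCMat g ℓ ℓ) := by
          ext a b : 1
          rw [hY k a b, Matrix.zero_apply]
          by_cases hab : b = k
          · subst hab
            have h1 : (r + c) a b = 0 := midSpan_col_zero hS hp2 hk a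
            have h2 : f a 0 b = 0 := hIcol _ (hf a) b hk
            rw [hpe a b, h2, zero_add] at h1
            simp [h1]
          · rw [if_neg hab]
        rw [hYz]
        exact Submodule.zero_mem _
  · rw [Submodule.span_le]
    rintro m (⟨c, hc, ι, hι, rfl⟩ | ⟨c, hc, ι, hι, rfl⟩)
    · exact Submodule.mem_inf.mpr
        ⟨starChip_mul_mem_realPart hImod hc hι, starChip_mul_mem_midSpan hc (hIalg hι)⟩
    · exact Submodule.mem_inf.mpr
        ⟨mul_chip_mem_realPart hImod hc hι, mul_chip_mem_midSpan hc (hIalg hι)⟩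


end NSS
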